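/- Let J = (x_i x_j : 1 ≤ i < j ≤ a) ⊆ k[x_1,…,x_a] with a ≥ 2 be the edge ideal of the complete graph K_a. For every q ≥ 1, the minimal monomial generating set of J^q is exactly {x^δ : |δ| = 2q and 0 ≤ δ_i ≤ q for all i}. -/

import Mathlib

open MvPolynomial Pointwise

/-- exponent vectors of edges -/
def edgeSet (a : ℕ) : Set (Fin a →₀ ℕ) :=
  {s | ∃ i j : Fin a, i < j ∧ s = Finsupp.single i 1 + Finsupp.single j 1}

lemma sum_single_one {a : ℕ} (i : Fin a) :
    (∑ l, Finsupp.single i 1 l) = 1 := by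
  simp [Finsupp.single_apply]

lemma mem_edgeSet_props {a : ℕ} {s : Fin a →₀ ℕ} (hs : s ∈ edgeSet a) :
    (∑ l, s l) = 2 ∧ ∀ l, s l ≤ 1 := by
  obtain ⟨i, j, hij, rfl⟩ := hs
  constructor
  · simp [Finsupp.add_apply, Finset.sum_add_distrib, sum_single_one]
  · intro l
    simp only [Finsupp.add_apply, Finsupp.single_apply]
    rcases eq_or_ne i l with rfl | h1
    · rcases eq_or_ne j i with rfl | h2
      · exact absurd hij (lt_irrefl _)
      · simp [h2]
    · rcases eq_or_ne j l with rfl | h2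
      · simp [h1]
      · simp [h1, h2]

lemma mem_nsmul_edgeSet_props {a : ℕ} : ∀ (q : ℕ) {s : Fin a →₀ ℕ},
    s ∈ q • edgeSet a → (∑ l, s l) = 2 * q ∧ ∀ l, s l ≤ q := by
  intro q
  induction q with
  | zero =>
    intro s hs
    simp only [zero_smul, Set.mem_zero] at hs
    subst hs; simp
  | succ n ih =>
    intro s hs
    rw [succ_nsmul] at hs
    rw [Set.mem_add] at hs
    obtain ⟨u, hu, v, hv, rfl⟩ := hs
    obtain ⟨hu1, hu2⟩ := ih hu
    obtain ⟨hv1, hv2⟩ := mem_edgeSet_props hv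
    constructor
    · simp only [Finsupp.add_apply, Finset.sum_add_distrib, hu1, hv1]; ring
    · intro l
      simp only [Finsupp.add_apply]
      exact add_le_add (hu2 l) (hv2 l)

lemma pairing {a : ℕ} (ha : 2 ≤ a) : ∀ (q : ℕ) (μ : Fin a →₀ ℕ),
    (∑ l, μ l) = 2 * q → (∀ l, μ l ≤ q) → μ ∈ q • edgeSet a := by
  intro q
  induction q with
  | zero =>
    intro μ h1 _
    have hμ : μ = 0 := by
      ext l
      have := ((Finset.sum_eq_zero_iff (f := fun l => μ l) (s := Finset.univ)).mp (by simpa using h1)) l (Finset.mem_univ l)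
      simpa using this
    simp [hμ, Set.mem_zero]
  | succ n ih =>
    intro μ h1 h2
    obtain ⟨i, -, hi⟩ := Finset.exists_max_image Finset.univ μ
      ⟨⟨0, by omega⟩, Finset.mem_univ _⟩
    have hne : (Finset.univ.erase i).Nonempty := by
      rw [← Finset.card_pos, Finset.card_erase_of_mem (Finset.mem_univ i)]
      simp only [Finset.card_univ, Fintype.card_fin]
      omega
    obtain ⟨j, hjmem, hj⟩ := Finset.exists_max_image (Finset.univ.erase i) μ hne
    have hji : j ≠ i := Finset.ne_of_mem_erase hjmem
    have hμj : 1 ≤ μ j := by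
      by_contra h
      push_neg at h
      have hj0 : μ j = 0 := by omega
      have hsum : ∑ l, μ l = μ i := by
        refine Finset.sum_eq_single_of_mem i (Finset.mem_univ i) (fun b _ hb => ?_)
        have := hj b (Finset.mem_erase.mpr ⟨hb, Finset.mem_univ b⟩)
        omega
      have := h2 i
      omega
    have hμi : 1 ≤ μ i := le_trans hμj (hi j (Finset.mem_univ j))
    set e : Fin a →₀ ℕ := Finsupp.single i 1 + Finsupp.single j 1 with he
    have hle : e ≤ μ := by
      rw [Finsupp.le_def]
      intro l
      simp only [he, Finsupp.add_apply, Finsupp.single_apply]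
      rcases eq_or_ne i l with rfl | h1'
      · rw [if_pos rfl, if_neg hji]; omega
      · rcases eq_or_ne j l with rfl | h2'
        · rw [if_neg h1', if_pos rfl]; omega
        · rw [if_neg h1', if_neg h2']; omega
    obtain ⟨μ', rfl⟩ := le_iff_exists_add.mp hle
    have hesum : ∑ l, e l = 2 := by
      simp [he, Finsupp.add_apply, Finset.sum_add_distrib, sum_single_one]
    have hsum' : ∑ l, μ' l = 2 * n := by
      have : ∑ l, (e + μ') l = (∑ l, e l) + ∑ l, μ' l := by
        simp [Finsupp.add_apply, Finset.sum_add_distrib]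
      omega
    have hbound : ∀ l, μ' l ≤ n := by
      intro l
      have hl2 : e l + μ' l ≤ n + 1 := by
        have := h2 l
        rwa [Finsupp.add_apply] at this
      by_cases h1' : l = i
      · subst h1'
        have : e l = 1 := by simp [he, Finsupp.single_apply, hji]
        omega
      · by_cases h2' : l = j
        · subst h2'
          have : e l = 1 := by simp [he, Finsupp.single_apply, Ne.symm hji]
          omega
        · have hig : i ≠ l := fun h => h1' h.symm
          have hjg : j ≠ l := fun h => h2' h.symm
          have hel : e l = 0 := by simp [he, Finsupp.single_apply, hig, hjg]
          by_contra hc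
          push_neg at hc
          have hμl : (e + μ') l = μ' l := by
            rw [Finsupp.add_apply, hel, zero_add]
          have hlj : (e + μ') l ≤ (e + μ') j :=
            hj l (Finset.mem_erase.mpr ⟨h1', Finset.mem_univ l⟩)
          have hjiq : (e + μ') j ≤ (e + μ') i := hi j (Finset.mem_univ j)
          have hij' : i ∉ ({j, l} : Finset (Fin a)) := by
            simp only [Finset.mem_insert, Finset.mem_singleton]
            push_neg
            exact ⟨Ne.symm hji, hig⟩
          have hjl' : j ∉ ({l} : Finset (Fin a)) := by
            simpa using hjg
          have hsub : (e + μ') i + ((e + μ') j + (e + μ') l) ≤ ∑ x, (e + μ') x := by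
            have h := Finset.sum_le_sum_of_subset
              (f := fun x => (e + μ') x)
              (Finset.subset_univ ({i, j, l} : Finset (Fin a)))
            rwa [Finset.sum_insert hij', Finset.sum_insert hjl',
              Finset.sum_singleton] at h
          have hh1 : ∑ x, (e + μ') x = 2 * (n + 1) := h1
          omega
    have heE : e ∈ edgeSet a := by
      rcases lt_or_gt_of_ne hji with h | h
      · exact ⟨j, i, h, by rw [he, add_comm]⟩
      · exact ⟨i, j, h, rfl⟩
    rw [succ_nsmul]
    rw [add_comm e μ']
    exact Set.add_mem_add (ih μ' hsum' hbound) heE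

lemma X_mul_X_eq_monomial {k : Type*} [Field k] {a : ℕ} (i j : Fin a) :
    (X i * X j : MvPolynomial (Fin a) k)
      = monomial (Finsupp.single i 1 + Finsupp.single j 1) 1 := by
  rw [X, X, monomial_mul, mul_one]

lemma monomial_image_mul (k : Type*) [Field k] {a : ℕ} (A B : Set (Fin a →₀ ℕ)) :
    Ideal.span ((fun s => monomial s (1 : k)) '' A) *
        Ideal.span ((fun s => monomial s (1 : k)) '' B)
      = Ideal.span ((fun s => monomial s (1 : k)) '' (A + B)) := by
  rw [Ideal.span_mul_span']
  congr 1
  ext p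
  simp only [Set.mem_mul, Set.mem_image]
  constructor
  · rintro ⟨x, ⟨u, hu, rfl⟩, y, ⟨v, hv, rfl⟩, rfl⟩
    exact ⟨u + v, Set.add_mem_add hu hv, by rw [monomial_mul, mul_one]⟩
  · rintro ⟨s, hs, rfl⟩
    rw [Set.mem_add] at hs
    obtain ⟨u, hu, v, hv, rfl⟩ := hs
    exact ⟨monomial u 1, ⟨u, hu, rfl⟩, monomial v 1, ⟨v, hv, rfl⟩,
      by rw [monomial_mul, mul_one]⟩

lemma span_pow_edge (k : Type*) [Field k] {a : ℕ} (q : ℕ) :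
    (Ideal.span ((fun s => monomial s (1 : k)) '' edgeSet a)) ^ q
      = Ideal.span ((fun s => monomial s (1 : k)) '' (q • edgeSet a)) := by
  induction q with
  | zero =>
    rw [pow_zero, zero_smul]
    rw [show ((0 : Set (Fin a →₀ ℕ))) = {0} from rfl, Set.image_singleton]
    rw [show (monomial (0 : Fin a →₀ ℕ) (1 : k)) = 1 by simp]
    rw [Ideal.span_singleton_one, Ideal.one_eq_top]
  | succ n ih =>
    rw [pow_succ, ih, monomial_image_mul, ← succ_nsmul]

def isMinimalGenerator {sigma k : Type*} [Field k]
    (L : Ideal (MvPolynomial sigma k)) (m : MvPolynomial sigma k) : Prop :=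
  m ∈ L ∧
    m ∉ Ideal.span (Set.range (MvPolynomial.X : sigma → MvPolynomial sigma k)) * L

theorem stmt_11 (k : Type*) [Field k] (a q : ℕ) (ha : 2 ≤ a) (hq : 1 ≤ q)
    (J : Ideal (MvPolynomial (Fin a) k))
    (hJ : J = Ideal.span {p | ∃ i j : Fin a, i < j ∧ p = X i * X j})
    (δ : Fin a →₀ ℕ) :
    isMinimalGenerator (J ^ q) (monomial δ (1 : k)) ↔
      (∑ i, δ i) = 2 * q ∧ ∀ i, δ i ≤ q := by
  classical
  have hE : J = Ideal.span ((fun s => monomial s (1 : k)) '' edgeSet a) := by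
    rw [hJ]; congr 1
    ext p
    simp only [Set.mem_setOf_eq, Set.mem_image]
    constructor
    · rintro ⟨i, j, hij, rfl⟩
      exact ⟨_, ⟨i, j, hij, rfl⟩, (X_mul_X_eq_monomial i j).symm⟩
    · rintro ⟨s, ⟨i, j, hij, rfl⟩, rfl⟩
      exact ⟨i, j, hij, (X_mul_X_eq_monomial i j).symm⟩
  have hX : Set.range (X : Fin a → MvPolynomial (Fin a) k)
      = (fun s => monomial s (1 : k)) ''
          Set.range (fun i : Fin a => Finsupp.single i 1) := by
    ext p
    simp only [Set.mem_range, Set.mem_image]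
    constructor
    · rintro ⟨i, rfl⟩
      exact ⟨_, ⟨i, rfl⟩, by rw [X]⟩
    · rintro ⟨s, ⟨i, rfl⟩, rfl⟩
      exact ⟨i, by rw [X]⟩
  have hJq : J ^ q = Ideal.span ((fun s => monomial s (1 : k)) '' (q • edgeSet a)) := by
    rw [hE, span_pow_edge]
  have hmJq : Ideal.span (Set.range (X : Fin a → MvPolynomial (Fin a) k)) * J ^ q
      = Ideal.span ((fun s => monomial s (1 : k)) ''
          (Set.range (fun i : Fin a => Finsupp.single i 1) + q • edgeSet a)) := by
    rw [hJq, hX, monomial_image_mul]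
  have hsupp : (monomial δ (1 : k)).support = {δ} := by
    rw [support_monomial, if_neg one_ne_zero]
  have hmem1 : monomial δ (1 : k) ∈ J ^ q ↔ ∃ μ ∈ q • edgeSet a, μ ≤ δ := by
    rw [hJq, mem_ideal_span_monomial_image, hsupp]
    simp
  have hmem2 : monomial δ (1 : k) ∈
        Ideal.span (Set.range (X : Fin a → MvPolynomial (Fin a) k)) * J ^ q ↔
      ∃ ν ∈ Set.range (fun i : Fin a => Finsupp.single i 1) + q • edgeSet a, ν ≤ δ := by
    rw [hmJq, mem_ideal_span_monomial_image, hsupp]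
    simp
  rw [isMinimalGenerator, hmem1, hmem2]
  constructor
  · rintro ⟨⟨μ, hμ, hle⟩, hnot⟩
    have hδμ : δ = μ := by
      by_contra hne
      obtain ⟨l, hl⟩ : ∃ l, μ l < δ l := by
        by_contra h
        push_neg at h
        refine hne (le_antisymm (Finsupp.le_def.mpr h) hle)
      refine hnot ⟨Finsupp.single l 1 + μ, Set.add_mem_add ⟨l, rfl⟩ hμ, ?_⟩
      rw [Finsupp.le_def]
      intro m
      rw [Finsupp.add_apply, Finsupp.single_apply]
      rcases eq_or_ne l m with rfl | hml
      · rw [if_pos rfl]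
        omega
      · rw [if_neg hml]
        simpa using Finsupp.le_def.mp hle m
    rw [hδμ]
    exact mem_nsmul_edgeSet_props q hμ
  · rintro ⟨h1, h2⟩
    refine ⟨⟨δ, pairing ha q δ h1 h2, le_refl δ⟩, ?_⟩
    rintro ⟨ν, hν, hle⟩
    rw [Set.mem_add] at hν
    obtain ⟨v, ⟨l, rfl⟩, μ, hμ, rfl⟩ := hν
    have hsν : (∑ m, (Finsupp.single l 1 + μ : Fin a →₀ ℕ) m) = 1 + 2 * q := by
      have := (mem_nsmul_edgeSet_props q hμ).1
      simp only [Finsupp.add_apply, Finset.sum_add_distrib, sum_single_one, this]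
    have hges : (∑ m, (Finsupp.single l 1 + μ : Fin a →₀ ℕ) m) ≤ ∑ m, δ m :=
      Finset.sum_le_sum fun m _ => Finsupp.le_def.mp hle m
    omega
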